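/- Let X be a finite set, b a graph over (X, m) with m : X → (0,∞), p > 1, and let d ∈ R_p(b,m), i.e., d symmetric with Σ_y b(x,y) d(x,y)^(p/(p-1)) ≤ m(x) for all x. Define h⁰(d) = min over nonempty W ⊆ X of |∂W|_{bd}/m(W), where |∂W|_{bd} = Σ_{(x,y) ∈ W×(X\W)} b(x,y)d(x,y). Then for every nonzero φ : X → ℝ, (2^(p-1)/p^p) * h⁰(d)^p ≤ E_p(φ)/‖φ‖_{m,p}^p, where E_p(φ) = (1/2)Σ_{x,y} b(x,y)|φ(x)-φ(y)|^p and ‖φ‖_{m,p}^p = Σ_x m(x)|φ(x)|^p. -/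

import Mathlib

open Real Finset

-- midpoint convexity for negative exponent
lemma aux_mid {c x y : ℝ} (hc : c ≤ 0) (hx : 0 < x) (hy : 0 < y) :
    2 * ((x + y) / 2) ^ c ≤ x ^ c + y ^ c := by
  have hm : 0 < (x + y) / 2 := by linarith
  have h1 : x * y ≤ ((x + y) / 2) ^ (2:ℕ) := by nlinarith [sq_nonneg (x - y)]
  have h2 : ((x + y) / 2) ^ c ≤ (x * y) ^ (c / 2) := by
    have : ((x + y) / 2) ^ c = (((x + y) / 2) ^ (2:ℕ)) ^ (c / 2) := by
      rw [← Real.rpow_natCast ((x+y)/2) 2, ← Real.rpow_mul hm.le]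
      congr 1; ring
    rw [this]
    exact Real.rpow_le_rpow_of_nonpos (by positivity) h1 (by linarith)
  have h3 : (x * y) ^ (c / 2) = x ^ (c/2) * y ^ (c/2) := Real.mul_rpow hx.le hy.le
  have h4 : x ^ (c/2) * x ^ (c/2) = x ^ c := by
    rw [← Real.rpow_add hx]; ring_nf
  have h5 : y ^ (c/2) * y ^ (c/2) = y ^ c := by
    rw [← Real.rpow_add hy]; ring_nf
  nlinarith [sq_nonneg (x ^ (c/2) - y ^ (c/2))]

lemma aux_slope {s u v : ℝ} (hs0 : 0 < s) (hs1 : s < 1) (hv : 0 < v) (hvu : v ≤ u) :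
    s * ((u + v) / 2) ^ (s - 1) * (u - v) ≤ u ^ s - v ^ s := by
  set c : ℝ := (u + v) / 2 with hc_def
  have hc : 0 < c := by simp only [hc_def]; linarith
  have hcu : c ≤ u := by simp only [hc_def]; linarith
  set H : ℝ → ℝ := fun x => x ^ s - (2*c - x) ^ s - 2*s*c^(s-1)*(x - c) with hH
  have hd : ∀ x ∈ Set.Icc c u, HasDerivAt H
      (s * x^(s-1) - s * (2*c-x)^(s-1) * (-1) - 2*s*c^(s-1)) x := by
    intro x hx
    have hx0 : 0 < x := lt_of_lt_of_le hc hx.1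
    have hx2 : 0 < 2*c - x := by
      have : x ≤ u := hx.2
      simp only [hc_def] at *
      linarith
    have h1 : HasDerivAt (fun x : ℝ => x ^ s) (s * x^(s-1)) x :=
      Real.hasDerivAt_rpow_const (Or.inl hx0.ne')
    have h2 : HasDerivAt (fun x : ℝ => 2*c - x) (-1) x := by
      simpa using (hasDerivAt_id x).const_sub (2*c)
    have h3 : HasDerivAt (fun x : ℝ => (2*c - x) ^ s) (s * (2*c-x)^(s-1) * (-1)) x := by
      have := h2.rpow_const (p := s) (Or.inl hx2.ne')
      convert this using 1; ring
    have h4 : HasDerivAt (fun x : ℝ => 2*s*c^(s-1)*(x - c)) (2*s*c^(s-1)) x := by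
      simpa using ((hasDerivAt_id x).sub_const c).const_mul (2*s*c^(s-1))
    exact (h1.sub h3).sub h4
  have hmono : MonotoneOn H (Set.Icc c u) := by
    apply monotoneOn_of_deriv_nonneg (convex_Icc c u)
    · exact fun x hx => (hd x hx).continuousAt.continuousWithinAt
    · intro x hx
      rw [interior_Icc] at hx
      exact ((hd x (Set.mem_Icc_of_Ioo hx)).differentiableAt).differentiableWithinAt
    · intro x hx
      rw [interior_Icc] at hx
      rw [(hd x (Set.mem_Icc_of_Ioo hx)).deriv]
      have hx0 : 0 < x := lt_of_lt_of_le hc hx.1.le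
      have hx2 : 0 < 2*c - x := by
        have : x < u := hx.2
        simp only [hc_def] at *
        linarith
      have := aux_mid (x := x) (y := 2*c - x) (c := s - 1) (by linarith) hx0 hx2
      have hmid : (x + (2*c - x)) / 2 = c := by ring
      rw [hmid] at this
      nlinarith
  have h0 : H c = 0 := by simp [hH]; ring_nf
  have h1 : H c ≤ H u := hmono (Set.left_mem_Icc.mpr hcu) (Set.right_mem_Icc.mpr hcu) hcu
  have h2cu : 2*c - u = v := by simp only [hc_def]; ring
  have hHu : H u = u ^ s - v ^ s - s * c^(s-1) * (u - v) := by
    simp only [hH, h2cu]; ring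
  rw [h0, hHu] at h1
  linarith

lemma aux_s2 {s : ℝ} (hs0 : 0 < s) (hs1 : s ≤ 1) : s * 2 ^ (1 - s) ≤ 1 := by
  set x : ℝ := (1 - s) * Real.log 2 with hx_def
  have hlog2 : Real.log 2 ≤ 1 := by
    have := Real.log_le_sub_one_of_pos (x := 2) (by norm_num)
    linarith
  have hlog2' : 0 < Real.log 2 := Real.log_pos (by norm_num)
  have h2pow : (2:ℝ) ^ (1 - s) = Real.exp x := by
    rw [Real.rpow_def_of_pos (by norm_num), hx_def]; ring_nf
  have hsx : s ≤ 1 - x := by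
    have : x ≤ 1 - s := by
      rw [hx_def]
      nlinarith
    linarith
  have hexp : (1 - x) * Real.exp x ≤ 1 := by
    have h1 : -x + 1 ≤ Real.exp (-x) := Real.add_one_le_exp (-x)
    have h2 : 0 < Real.exp x := Real.exp_pos x
    have h3 : Real.exp (-x) * Real.exp x = 1 := by
      rw [← Real.exp_add]; simp
    nlinarith
  rw [h2pow]
  have h2 : 0 < Real.exp x := Real.exp_pos x
  nlinarith


lemma aux_key {p : ℝ} (hp : 1 < p) {A B : ℝ} (hB : 0 ≤ B) (hBA : B ≤ A) :
    A ^ p - B ^ p ≤ p * (A - B) * ((A ^ p + B ^ p) / 2) ^ ((p - 1) / p) := by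
  have hp0 : 0 < p := by linarith
  have hA : 0 ≤ A := le_trans hB hBA
  have hs0 : 0 < 1/p := by positivity
  have hs1 : 1/p < 1 := by rw [div_lt_one hp0]; linarith
  have hexp : (p - 1)/p = 1 - 1/p := by field_simp
  have hc2 : (0:ℝ) < 2 ^ ((p-1)/p) := by positivity
  rcases eq_or_lt_of_le hB with hB0 | hB0
  · -- B = 0
    rw [← hB0, Real.zero_rpow hp0.ne']
    rcases eq_or_lt_of_le hA with hA0 | hA0
    · rw [← hA0, Real.zero_rpow hp0.ne']; norm_num
    · have h5 : 2 ^ ((p-1)/p) ≤ p := by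
        have h := aux_s2 hs0 hs1.le
        rw [hexp]
        have hgt : (0:ℝ) < 2 ^ (1 - 1/p) := by positivity
        calc (2:ℝ) ^ (1 - 1/p) = p * (1/p * 2 ^ (1 - 1/p)) := by field_simp
        _ ≤ p * 1 := mul_le_mul_of_nonneg_left h hp0.le
        _ = p := mul_one p
      have h1 : ((A ^ p + 0) / 2) ^ ((p-1)/p) = A ^ (p-1) / 2 ^ ((p-1)/p) := by
        rw [add_zero, Real.div_rpow (by positivity) (by norm_num)]
        congr 1
        rw [← Real.rpow_mul hA]
        congr 1
        field_simp
      rw [h1]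
      have h2 : A ^ (1:ℝ) * A ^ (p-1) = A ^ p := by
        rw [← Real.rpow_add hA0]; norm_num
      rw [Real.rpow_one] at h2
      rw [sub_zero, sub_zero]
      have hkey : p * A * (A ^ (p-1) / 2 ^ ((p-1)/p)) = p * A ^ p / 2 ^ ((p-1)/p) := by
        field_simp; nlinarith [h2]
      rw [hkey, le_div_iff₀ hc2]
      have hApos : 0 < A ^ p := Real.rpow_pos_of_pos hA0 p
      nlinarith
  · -- B > 0
    set u : ℝ := A ^ p with hu_def
    set v : ℝ := B ^ p with hv_def
    have hv : 0 < v := Real.rpow_pos_of_pos hB0 p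
    have hvu : v ≤ u := Real.rpow_le_rpow hB hBA hp0.le
    have hus : u ^ (1/p) = A := by
      rw [hu_def, one_div, Real.rpow_rpow_inv hA hp0.ne']
    have hvs : v ^ (1/p) = B := by
      rw [hv_def, one_div, Real.rpow_rpow_inv hB hp0.ne']
    have hslope := aux_slope hs0 hs1 hv hvu
    rw [hus, hvs] at hslope
    have hm : 0 < (u + v) / 2 := by positivity
    have hm1 : ((u + v)/2) ^ ((1:ℝ)/p - 1) * ((u + v)/2) ^ ((p-1)/p) = 1 := by
      rw [← Real.rpow_add hm]
      have : (1:ℝ)/p - 1 + (p-1)/p = 0 := by field_simp; ring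
      rw [this, Real.rpow_zero]
    have hmpos : 0 < ((u + v)/2) ^ ((p-1)/p) := Real.rpow_pos_of_pos hm _
    -- multiply hslope by p * ((u+v)/2)^((p-1)/p)
    have := mul_le_mul_of_nonneg_left hslope (by positivity : (0:ℝ) ≤ p * ((u + v)/2) ^ ((p-1)/p))
    calc u - v = (p * (1/p)) * (((u + v)/2) ^ ((p-1)/p) * ((u + v)/2) ^ ((1:ℝ)/p - 1)) * (u - v) := by
          rw [mul_comm (((u + v)/2) ^ ((p-1)/p)), hm1, mul_one_div_cancel hp0.ne', one_mul, one_mul]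
    _ = p * ((u + v)/2) ^ ((p-1)/p) * (1/p * ((u + v)/2) ^ ((1:ℝ)/p - 1) * (u - v)) := by ring
    _ ≤ p * ((u + v)/2) ^ ((p-1)/p) * (A - B) := this
    _ = p * (A - B) * ((u + v)/2) ^ ((p-1)/p) := by ring

lemma aux_key_abs {p : ℝ} (hp : 1 < p) {x y : ℝ} (hxy : |y| ≤ |x|) :
    |x| ^ p - |y| ^ p ≤ p * |x - y| * ((|x| ^ p + |y| ^ p) / 2) ^ ((p - 1) / p) := by
  have h1 := aux_key hp (abs_nonneg y) hxy
  have h2 : |x| - |y| ≤ |x - y| := abs_sub_abs_le_abs_sub x y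
  have h3 : (0:ℝ) ≤ ((|x| ^ p + |y| ^ p) / 2) ^ ((p - 1) / p) :=
    Real.rpow_nonneg (by positivity) _
  have hp0 : (0:ℝ) < p := by linarith
  calc |x| ^ p - |y| ^ p
      ≤ p * (|x| - |y|) * ((|x| ^ p + |y| ^ p) / 2) ^ ((p - 1) / p) := h1
  _ ≤ p * |x - y| * ((|x| ^ p + |y| ^ p) / 2) ^ ((p - 1) / p) := by
      apply mul_le_mul_of_nonneg_right _ h3
      exact mul_le_mul_of_nonneg_left h2 hp0.le

lemma aux_half {X : Type*} [Fintype X] [DecidableEq X] (o : X → ℕ) (ho : Function.Injective o)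
    (F : X → X → ℝ) (hsym : ∀ x y, F x y = F y x) (hdiag : ∀ x, F x x = 0) :
    ∑ z ∈ (Finset.univ ×ˢ Finset.univ).filter (fun z : X × X => o z.1 < o z.2), F z.1 z.2
      = (1/2) * ∑ x, ∑ y, F x y := by
  classical
  set P : Finset (X × X) := Finset.univ ×ˢ Finset.univ with hP_def
  have htot : ∑ x, ∑ y, F x y = ∑ z ∈ P, F z.1 z.2 := by
    rw [hP_def, Finset.sum_product]
  have hsplit := Finset.sum_filter_add_sum_filter_not P (fun z : X × X => o z.1 < o z.2)
    (fun z => F z.1 z.2)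
  have hsplit2 := Finset.sum_filter_add_sum_filter_not
    (P.filter (fun z : X × X => ¬ o z.1 < o z.2)) (fun z : X × X => o z.2 < o z.1)
    (fun z => F z.1 z.2)
  have hzero : ∑ z ∈ (P.filter (fun z : X × X => ¬ o z.1 < o z.2)).filter
      (fun z : X × X => ¬ o z.2 < o z.1), F z.1 z.2 = 0 := by
    apply Finset.sum_eq_zero
    intro z hz
    simp only [Finset.mem_filter] at hz
    have : o z.1 = o z.2 := by omega
    have : z.1 = z.2 := ho this
    rw [this, hdiag]
  have hswap : ∑ z ∈ (P.filter (fun z : X × X => ¬ o z.1 < o z.2)).filter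
      (fun z : X × X => o z.2 < o z.1), F z.1 z.2
      = ∑ z ∈ P.filter (fun z : X × X => o z.1 < o z.2), F z.1 z.2 := by
    apply Finset.sum_nbij' (i := fun z : X × X => (z.2, z.1)) (j := fun z : X × X => (z.2, z.1))
    · intro z hz
      simp only [Finset.mem_filter, hP_def, Finset.mem_product, Finset.mem_univ, true_and] at hz ⊢
      omega
    · intro z hz
      simp only [Finset.mem_filter, hP_def, Finset.mem_product, Finset.mem_univ, true_and] at hz ⊢
      omega
    · intro z _; rfl
    · intro z _; rfl
    · intro z _
      exact hsym z.1 z.2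
  rw [htot, ← hsplit, ← hsplit2, hzero, add_zero, hswap]
  ring

/-- Cheeger inequality for the Dirichlet p-spectral gap (Theorem 3.1, finite version):
for `d ∈ R_p(b,m)`, `(2^(p-1)/p^p) h⁰(d)^p ≤ E_p(φ)/‖φ‖_{m,p}^p` for every nonzero `φ`. -/
theorem cheeger_inequality_dirichlet {X : Type*} [Fintype X] [DecidableEq X] [Nonempty X]
    (b : X → X → ℝ) (hb0 : ∀ x y, 0 ≤ b x y) (hbsymm : ∀ x y, b x y = b y x)
    (hbdiag : ∀ x, b x x = 0)
    (m : X → ℝ) (hm : ∀ x, 0 < m x) (p : ℝ) (hp : 1 < p)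
    (d : X → X → ℝ) (hd0 : ∀ x y, 0 ≤ d x y) (hdsymm : ∀ x y, d x y = d y x)
    (hdRp : ∀ x, ∑ y, b x y * d x y ^ (p / (p - 1)) ≤ m x)
    (h : ℝ)
    (hh : h = sInf {r : ℝ | ∃ W : Finset X, W.Nonempty ∧
      r = (∑ x ∈ W, ∑ y ∈ Wᶜ, b x y * d x y) / (∑ x ∈ W, m x)})
    (φ : X → ℝ) (hφ : φ ≠ 0) :
    (2 ^ (p - 1) / p ^ p) * h ^ p ≤
      ((1 / 2) * ∑ x, ∑ y, b x y * |φ x - φ y| ^ p) / (∑ x, m x * |φ x| ^ p) := by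
  have hp0 : (0:ℝ) < p := by linarith
  set q : ℝ := p / (p - 1) with hq_def
  have hq1 : 1 < q := by
    rw [hq_def, lt_div_iff₀ (by linarith)]; linarith
  have hconj : 1/p + 1/q = 1 := by
    rw [hq_def]; field_simp; ring
  have hpq : p.HolderConjugate q := Real.holderConjugate_iff.mpr ⟨hp, by
    rw [← one_div, ← one_div]; exact hconj⟩
  set ψ : X → ℝ := fun x => |φ x| ^ p with hψ_def
  have hψ0 : ∀ x, 0 ≤ ψ x := fun x => Real.rpow_nonneg (abs_nonneg _) p
  set N : ℝ := ∑ x, m x * ψ x with hN_def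
  have hN : 0 < N := by
    have hx : ∃ x, φ x ≠ 0 := by
      by_contra hc
      push_neg at hc
      exact hφ (funext hc)
    obtain ⟨x0, hx0⟩ := hx
    apply Finset.sum_pos' (fun x _ => mul_nonneg (hm x).le (hψ0 x))
    exact ⟨x0, Finset.mem_univ x0, mul_pos (hm x0)
      (Real.rpow_pos_of_pos (abs_pos.mpr hx0) p)⟩
  -- basic facts about h
  have hSne : ∀ (W : Finset X), W.Nonempty →
      ((∑ x ∈ W, ∑ y ∈ Wᶜ, b x y * d x y) / (∑ x ∈ W, m x)) ∈
        {r : ℝ | ∃ W : Finset X, W.Nonempty ∧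
          r = (∑ x ∈ W, ∑ y ∈ Wᶜ, b x y * d x y) / (∑ x ∈ W, m x)} :=
    fun W hW => ⟨W, hW, rfl⟩
  have hlb : ∀ r ∈ {r : ℝ | ∃ W : Finset X, W.Nonempty ∧
      r = (∑ x ∈ W, ∑ y ∈ Wᶜ, b x y * d x y) / (∑ x ∈ W, m x)}, (0:ℝ) ≤ r := by
    rintro r ⟨W, hW, rfl⟩
    apply div_nonneg
    · exact Finset.sum_nonneg fun x _ => Finset.sum_nonneg fun y _ =>
        mul_nonneg (hb0 x y) (hd0 x y)
    · exact Finset.sum_nonneg fun x _ => (hm x).le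
  have hh0 : 0 ≤ h := by
    rw [hh]
    exact Real.sInf_nonneg hlb
  have hmW : ∀ (W : Finset X), W.Nonempty → 0 < ∑ x ∈ W, m x :=
    fun W hW => Finset.sum_pos (fun x _ => hm x) hW
  have hhW : ∀ (W : Finset X), W.Nonempty →
      h * (∑ x ∈ W, m x) ≤ ∑ x ∈ W, ∑ y ∈ Wᶜ, b x y * d x y := by
    intro W hW
    have h1 : h ≤ (∑ x ∈ W, ∑ y ∈ Wᶜ, b x y * d x y) / (∑ x ∈ W, m x) := by
      rw [hh]
      exact csInf_le ⟨0, hlb⟩ (hSne W hW)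
    calc h * (∑ x ∈ W, m x) ≤
        ((∑ x ∈ W, ∑ y ∈ Wᶜ, b x y * d x y) / (∑ x ∈ W, m x)) * (∑ x ∈ W, m x) :=
          mul_le_mul_of_nonneg_right h1 (hmW W hW).le
    _ = ∑ x ∈ W, ∑ y ∈ Wᶜ, b x y * d x y := div_mul_cancel₀ _ (hmW W hW).ne'
  -- sorting
  set n : ℕ := Fintype.card X with hn_def
  have hnpos : 0 < n := Fintype.card_pos
  set e : Fin n ≃ X := (Fintype.equivFin X).symm with he_def
  set σ : Equiv.Perm (Fin n) := Tuple.sort (fun i => -ψ (e i)) with hσ_def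
  set ε : Fin n ≃ X := σ.trans e with hε_def
  have hsort : ∀ i j : Fin n, i ≤ j → ψ (ε j) ≤ ψ (ε i) := by
    intro i j hij
    have := Tuple.monotone_sort (fun i => -ψ (e i)) hij
    simp only [Function.comp_apply] at this
    simp only [hε_def, Equiv.trans_apply]
    linarith
  set ord : X → ℕ := fun x => ((ε.symm x : Fin n) : ℕ) with hord_def
  have hord_lt : ∀ x, ord x < n := fun x => (ε.symm x).isLt
  have hord_inj : Function.Injective ord := by
    intro x y hxy
    have : ε.symm x = ε.symm y := Fin.ext hxy
    exact ε.symm.injective this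
  set g : ℕ → ℝ := fun i => if hi : i < n then ψ (ε ⟨i, hi⟩) else 0 with hg_def
  have hg_ord : ∀ x, g (ord x) = ψ x := by
    intro x
    simp only [hg_def, hord_def, dif_pos (hord_lt x)]
    congr 1
    rw [dif_pos (ε.symm x).isLt]
    exact congrArg ψ (ε.apply_symm_apply x)
  have hg0 : ∀ i, 0 ≤ g i := by
    intro i
    simp only [hg_def]
    split
    · exact hψ0 _
    · exact le_refl 0
  have hg_anti : ∀ i j : ℕ, i ≤ j → g j ≤ g i := by
    intro i j hij
    simp only [hg_def]
    split
    · rename_i hj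
      have hi : i < n := lt_of_le_of_lt hij hj
      rw [dif_pos hi]
      exact hsort ⟨i, hi⟩ ⟨j, hj⟩ hij
    · split
      · exact hψ0 _
      · exact le_refl 0
  -- level sets
  set W : ℕ → Finset X := fun k => Finset.univ.filter (fun x => ord x ≤ k) with hW_def
  have hWmem : ∀ k x, x ∈ W k ↔ ord x ≤ k := by
    intro k x
    simp [hW_def]
  have hWne : ∀ k, (W k).Nonempty := by
    intro k
    refine ⟨ε ⟨0, hnpos⟩, ?_⟩
    rw [hWmem]
    simp only [hord_def]
    rw [ε.symm_apply_apply]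
    exact Nat.zero_le k
  -- telescoping
  have htel0 : ∀ t : ℕ, ∑ k ∈ Finset.range t, (g k - g (k+1)) = g 0 - g t := by
    intro t
    have h1 := Finset.sum_range_sub (fun i => -g i) t
    simp only [neg_sub_neg] at h1
    rw [← h1]
  have htel : ∀ a t : ℕ, a ≤ t → ∑ k ∈ Finset.Ico a t, (g k - g (k+1)) = g a - g t := by
    intro a t hat
    rw [Finset.sum_Ico_eq_sub _ hat, htel0 t, htel0 a]
    ring
  have hgn : g n = 0 := by simp [hg_def]
  have hdelta : ∀ k : ℕ, 0 ≤ g k - g (k+1) := by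
    intro k
    have := hg_anti k (k+1) (Nat.le_succ k)
    linarith
  -- identity 1
  have id1 : N = ∑ k ∈ Finset.range n, (g k - g (k+1)) * ∑ x ∈ W k, m x := by
    have hstep : ∀ k : ℕ, (g k - g (k+1)) * (∑ x ∈ W k, m x)
        = ∑ x, ite (ord x ≤ k) ((g k - g (k+1)) * m x) 0 := by
      intro k
      simp only [hW_def, Finset.sum_filter, Finset.mul_sum, mul_ite, mul_zero]
    calc N = ∑ x, ψ x * m x := by
          rw [hN_def]; apply Finset.sum_congr rfl; intros; ring
    _ = ∑ x, ∑ k ∈ Finset.range n, ite (ord x ≤ k) ((g k - g (k+1)) * m x) 0 := by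
        apply Finset.sum_congr rfl
        intro x _
        have hfil : (Finset.range n).filter (fun k => ord x ≤ k) = Finset.Ico (ord x) n := by
          ext k
          simp only [Finset.mem_filter, Finset.mem_range, Finset.mem_Ico]
          constructor
          · rintro ⟨h1, h2⟩; exact ⟨h2, h1⟩
          · rintro ⟨h1, h2⟩; exact ⟨h2, h1⟩
        rw [← Finset.sum_filter, hfil, ← Finset.sum_mul,
          htel (ord x) n (hord_lt x).le, hgn, sub_zero, hg_ord]
    _ = ∑ k ∈ Finset.range n, ∑ x, ite (ord x ≤ k) ((g k - g (k+1)) * m x) 0 :=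
        Finset.sum_comm
    _ = ∑ k ∈ Finset.range n, (g k - g (k+1)) * ∑ x ∈ W k, m x := by
        apply Finset.sum_congr rfl; intro k _; rw [hstep]
  -- the half-plane set S
  set S : Finset (X × X) :=
    (Finset.univ ×ˢ Finset.univ).filter (fun z : X × X => ord z.1 < ord z.2) with hS_def
  set T : ℝ := ∑ z ∈ S, b z.1 z.2 * d z.1 z.2 * (ψ z.1 - ψ z.2) with hT_def
  -- identity 2
  have hprod : ∀ k : ℕ, (W k) ×ˢ (W k)ᶜ
      = (Finset.univ ×ˢ Finset.univ).filter (fun z : X × X => ord z.1 ≤ k ∧ k < ord z.2) := by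
    intro k
    ext z
    simp only [Finset.mem_product, Finset.mem_compl, Finset.mem_filter, Finset.mem_univ,
      true_and, hWmem, not_le]
  have id2 : ∑ k ∈ Finset.range n, (g k - g (k+1)) * (∑ x ∈ W k, ∑ y ∈ (W k)ᶜ, b x y * d x y)
      = T := by
    have hstep : ∀ k : ℕ,
        (g k - g (k+1)) * (∑ x ∈ W k, ∑ y ∈ (W k)ᶜ, b x y * d x y)
        = ∑ z ∈ Finset.univ ×ˢ Finset.univ,
            ite (ord z.1 ≤ k ∧ k < ord z.2)
              (b z.1 z.2 * d z.1 z.2 * (g k - g (k+1))) 0 := by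
      intro k
      rw [← Finset.sum_product', hprod k, Finset.sum_filter, Finset.mul_sum]
      apply Finset.sum_congr rfl
      intro z _
      split <;> ring
    rw [hT_def, hS_def, Finset.sum_filter]
    calc ∑ k ∈ Finset.range n, (g k - g (k+1)) * (∑ x ∈ W k, ∑ y ∈ (W k)ᶜ, b x y * d x y)
        = ∑ k ∈ Finset.range n, ∑ z ∈ Finset.univ ×ˢ Finset.univ,
            ite (ord z.1 ≤ k ∧ k < ord z.2)
              (b z.1 z.2 * d z.1 z.2 * (g k - g (k+1))) 0 := by
          apply Finset.sum_congr rfl; intro k _; rw [hstep]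
    _ = ∑ z ∈ Finset.univ ×ˢ Finset.univ, ∑ k ∈ Finset.range n,
            ite (ord z.1 ≤ k ∧ k < ord z.2)
              (b z.1 z.2 * d z.1 z.2 * (g k - g (k+1))) 0 := Finset.sum_comm
    _ = ∑ z ∈ Finset.univ ×ˢ Finset.univ,
          ite (ord z.1 < ord z.2) (b z.1 z.2 * d z.1 z.2 * (ψ z.1 - ψ z.2)) 0 := by
        apply Finset.sum_congr rfl
        intro z _
        have hfil : (Finset.range n).filter (fun k => ord z.1 ≤ k ∧ k < ord z.2)
            = Finset.Ico (ord z.1) (ord z.2) := by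
          ext k
          have h2 := hord_lt z.2
          simp only [Finset.mem_filter, Finset.mem_range, Finset.mem_Ico]
          omega
        rw [← Finset.sum_filter, hfil, ← Finset.mul_sum]
        by_cases hlt : ord z.1 < ord z.2
        · rw [htel (ord z.1) (ord z.2) hlt.le, hg_ord, hg_ord, if_pos hlt]
        · rw [if_neg hlt, Finset.Ico_eq_empty (by omega), Finset.sum_empty, mul_zero]
  -- step 1 : h * N ≤ T
  have step1 : h * N ≤ T := by
    rw [id1, Finset.mul_sum, ← id2]
    apply Finset.sum_le_sum
    intro k _
    have h1 := hhW (W k) (hWne k)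
    have h2 := hdelta k
    calc h * ((g k - g (k+1)) * ∑ x ∈ W k, m x)
        = (g k - g (k+1)) * (h * ∑ x ∈ W k, m x) := by ring
    _ ≤ (g k - g (k+1)) * (∑ x ∈ W k, ∑ y ∈ (W k)ᶜ, b x y * d x y) :=
        mul_le_mul_of_nonneg_left h1 h2
  -- Part B
  set Esum : ℝ := ∑ x, ∑ y, b x y * |φ x - φ y| ^ p with hEsum_def
  set E : ℝ := (1/2) * Esum with hE_def
  have hEsum0 : 0 ≤ Esum := by
    rw [hEsum_def]
    apply Finset.sum_nonneg
    intro x _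
    apply Finset.sum_nonneg
    intro y _
    exact mul_nonneg (hb0 x y) (Real.rpow_nonneg (abs_nonneg _) p)
  have hE0 : 0 ≤ E := by rw [hE_def]; linarith
  have hq0 : 0 < q := by linarith
  have hqinv : (p - 1)/p = 1/q := by rw [hq_def]; field_simp
  have habs2 : ∀ z ∈ S, |φ z.2| ≤ |φ z.1| := by
    intro z hz
    have hzS : ord z.1 < ord z.2 := by
      rw [hS_def, Finset.mem_filter] at hz
      exact hz.2
    have hψle : ψ z.2 ≤ ψ z.1 := by
      calc ψ z.2 = g (ord z.2) := (hg_ord _).symm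
      _ ≤ g (ord z.1) := hg_anti _ _ hzS.le
      _ = ψ z.1 := hg_ord _
    by_contra hc
    push_neg at hc
    have := Real.rpow_lt_rpow (abs_nonneg _) hc hp0
    simp only [hψ_def] at hψle
    linarith
  set fz : X × X → ℝ := fun z => (b z.1 z.2) ^ (1/p) * |φ z.1 - φ z.2| with hfz_def
  set gz : X × X → ℝ := fun z =>
    (b z.1 z.2) ^ (1/q) * d z.1 z.2 * ((ψ z.1 + ψ z.2)/2) ^ ((p-1)/p) with hgz_def
  have hbsplit : ∀ z : X × X, (b z.1 z.2) ^ ((1:ℝ)/p) * (b z.1 z.2) ^ ((1:ℝ)/q) = b z.1 z.2 := by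
    intro z
    rcases eq_or_lt_of_le (hb0 z.1 z.2) with hb | hb
    · rw [← hb, Real.zero_rpow (by positivity : (1:ℝ)/p ≠ 0), zero_mul]
    · rw [← Real.rpow_add hb, hconj, Real.rpow_one]
  have hpoint : ∀ z ∈ S, b z.1 z.2 * d z.1 z.2 * (ψ z.1 - ψ z.2) ≤ p * (fz z * gz z) := by
    intro z hz
    have hkey := aux_key_abs hp (habs2 z hz)
    have hbd : 0 ≤ b z.1 z.2 * d z.1 z.2 := mul_nonneg (hb0 _ _) (hd0 _ _)
    have h1 : ψ z.1 - ψ z.2 ≤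
        p * |φ z.1 - φ z.2| * ((ψ z.1 + ψ z.2)/2) ^ ((p-1)/p) := by
      simp only [hψ_def]
      exact hkey
    calc b z.1 z.2 * d z.1 z.2 * (ψ z.1 - ψ z.2)
        ≤ b z.1 z.2 * d z.1 z.2 *
          (p * |φ z.1 - φ z.2| * ((ψ z.1 + ψ z.2)/2) ^ ((p-1)/p)) :=
          mul_le_mul_of_nonneg_left h1 hbd
    _ = p * (fz z * gz z) := by
        conv_lhs => rw [← hbsplit z]
        simp only [hfz_def, hgz_def]
        ring
  have hTle : T ≤ p * ∑ z ∈ S, fz z * gz z := by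
    rw [hT_def, Finset.mul_sum]
    exact Finset.sum_le_sum hpoint
  -- Hölder
  have hfz0 : ∀ z ∈ S, 0 ≤ fz z := fun z _ =>
    mul_nonneg (Real.rpow_nonneg (hb0 _ _) _) (abs_nonneg _)
  have hgz0 : ∀ z ∈ S, 0 ≤ gz z := fun z _ =>
    mul_nonneg (mul_nonneg (Real.rpow_nonneg (hb0 _ _) _) (hd0 _ _))
      (Real.rpow_nonneg (by positivity) _)
  have hholder := Real.inner_le_Lp_mul_Lq_of_nonneg S hpq hfz0 hgz0
  -- compute the p-sum
  have hsumfp : ∑ z ∈ S, fz z ^ p = E := by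
    have hfp : ∀ z ∈ S, fz z ^ p = b z.1 z.2 * |φ z.1 - φ z.2| ^ p := by
      intro z _
      rw [hfz_def]
      simp only
      rw [Real.mul_rpow (Real.rpow_nonneg (hb0 _ _) _) (abs_nonneg _), one_div,
        Real.rpow_inv_rpow (hb0 _ _) hp0.ne']
    rw [Finset.sum_congr rfl hfp, hS_def]
    rw [aux_half ord hord_inj (fun x y => b x y * |φ x - φ y| ^ p)
      (fun x y => by rw [hbsymm x y, abs_sub_comm (φ x) (φ y)]) (fun x => by simp [hbdiag x])]
    all_goals rw [hE_def]
    all_goals rw [hEsum_def]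
  -- compute / bound the q-sum
  have hsumgq : ∑ z ∈ S, gz z ^ q ≤ N / 2 := by
    have hgq : ∀ z ∈ S, gz z ^ q = b z.1 z.2 * (d z.1 z.2) ^ q * ((ψ z.1 + ψ z.2)/2) := by
      intro z _
      rw [hgz_def]
      simp only
      rw [Real.mul_rpow (mul_nonneg (Real.rpow_nonneg (hb0 _ _) _) (hd0 _ _))
          (Real.rpow_nonneg (by positivity) _),
        Real.mul_rpow (Real.rpow_nonneg (hb0 _ _) _) (hd0 _ _), one_div,
        Real.rpow_inv_rpow (hb0 _ _) (by positivity : q ≠ 0), hqinv, one_div,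
        Real.rpow_inv_rpow (by positivity) (by positivity : q ≠ 0)]
    rw [Finset.sum_congr rfl hgq, hS_def]
    rw [aux_half ord hord_inj (fun x y => b x y * d x y ^ q * ((ψ x + ψ y)/2))
      (fun x y => by rw [hbsymm x y, hdsymm x y, add_comm (ψ x) (ψ y)]) (fun x => by simp [hbdiag x])]
    have hswap : ∑ x, ∑ y, b x y * d x y ^ q * ψ y = ∑ x, ∑ y, b x y * d x y ^ q * ψ x := by
      rw [Finset.sum_comm]
      apply Finset.sum_congr rfl
      intro x _
      apply Finset.sum_congr rfl
      intro y _
      rw [hbsymm y x, hdsymm y x]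
    have hbound : ∑ x, ∑ y, b x y * d x y ^ q * ψ x ≤ N := by
      rw [hN_def]
      apply Finset.sum_le_sum
      intro x _
      calc ∑ y, b x y * d x y ^ q * ψ x = (∑ y, b x y * d x y ^ q) * ψ x := by
            rw [Finset.sum_mul]
      _ ≤ m x * ψ x := mul_le_mul_of_nonneg_right (hdRp x) (hψ0 x)
    have hsplit : ∑ x, ∑ y, b x y * d x y ^ q * ((ψ x + ψ y)/2)
        = (1/2) * ((∑ x, ∑ y, b x y * d x y ^ q * ψ x) + ∑ x, ∑ y, b x y * d x y ^ q * ψ y) := by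
      rw [← Finset.sum_add_distrib, Finset.mul_sum]
      apply Finset.sum_congr rfl
      intro x _
      rw [← Finset.sum_add_distrib, Finset.mul_sum]
      apply Finset.sum_congr rfl
      intro y _
      ring
    rw [hsplit, hswap]
    linarith
  -- combine
  have hfinal : h * N ≤ p * E ^ ((1:ℝ)/p) * (N/2) ^ ((1:ℝ)/q) := by
    have h1 : (∑ z ∈ S, gz z ^ q) ^ ((1:ℝ)/q) ≤ (N/2) ^ ((1:ℝ)/q) :=
      Real.rpow_le_rpow (Finset.sum_nonneg fun z hz =>
        Real.rpow_nonneg (hgz0 z hz) q) hsumgq (by positivity)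
    have h2 : ∑ z ∈ S, fz z * gz z ≤ E ^ ((1:ℝ)/p) * (N/2) ^ ((1:ℝ)/q) := by
      calc ∑ z ∈ S, fz z * gz z
          ≤ (∑ z ∈ S, fz z ^ p) ^ (1/p) * (∑ z ∈ S, gz z ^ q) ^ (1/q) := hholder
      _ = E ^ ((1:ℝ)/p) * (∑ z ∈ S, gz z ^ q) ^ ((1:ℝ)/q) := by rw [hsumfp]
      _ ≤ E ^ ((1:ℝ)/p) * (N/2) ^ ((1:ℝ)/q) :=
          mul_le_mul_of_nonneg_left h1 (Real.rpow_nonneg hE0 _)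
    calc h * N ≤ T := step1
    _ ≤ p * ∑ z ∈ S, fz z * gz z := hTle
    _ ≤ p * (E ^ ((1:ℝ)/p) * (N/2) ^ ((1:ℝ)/q)) := mul_le_mul_of_nonneg_left h2 hp0.le
    _ = p * E ^ ((1:ℝ)/p) * (N/2) ^ ((1:ℝ)/q) := by ring
  -- final algebra
  have hN2 : 0 ≤ N/2 := by linarith
  have hraw : (h * N) ^ p ≤ (p * E ^ ((1:ℝ)/p) * (N/2) ^ ((1:ℝ)/q)) ^ p :=
    Real.rpow_le_rpow (mul_nonneg hh0 hN.le) hfinal hp0.le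
  have hL : (h * N) ^ p = h ^ p * N ^ p := Real.mul_rpow hh0 hN.le
  have hR : (p * E ^ ((1:ℝ)/p) * (N/2) ^ ((1:ℝ)/q)) ^ p
      = p ^ p * E * (N ^ (p-1) / 2 ^ (p-1)) := by
    rw [Real.mul_rpow (mul_nonneg hp0.le (Real.rpow_nonneg hE0 _))
        (Real.rpow_nonneg hN2 _),
      Real.mul_rpow hp0.le (Real.rpow_nonneg hE0 _), one_div,
      Real.rpow_inv_rpow hE0 hp0.ne']
    congr 1
    rw [← Real.rpow_mul hN2]
    have : (1:ℝ)/q * p = p - 1 := by rw [hq_def]; field_simp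
    rw [this, Real.div_rpow hN.le (by norm_num : (0:ℝ) ≤ 2) (p-1)]
  have hNp : N ^ p = N ^ (p-1) * N := by
    have h1 : N ^ (p - 1 + 1) = N ^ (p-1) * N ^ (1:ℝ) := Real.rpow_add hN _ _
    rw [Real.rpow_one] at h1
    rw [← h1]
    norm_num
  have hNp1 : 0 < N ^ (p-1) := Real.rpow_pos_of_pos hN _
  have h2p1 : (0:ℝ) < 2 ^ (p-1) := Real.rpow_pos_of_pos (by norm_num) _
  have hppp : (0:ℝ) < p ^ p := Real.rpow_pos_of_pos hp0 _
  have key2 : h ^ p * N ≤ p ^ p * E / 2 ^ (p-1) := by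
    rw [hL, hR, hNp] at hraw
    rw [← mul_le_mul_iff_of_pos_right hNp1]
    calc h ^ p * N * N ^ (p-1) = h ^ p * (N ^ (p-1) * N) := by ring
    _ ≤ p ^ p * E * (N ^ (p-1) / 2 ^ (p-1)) := hraw
    _ = p ^ p * E / 2 ^ (p-1) * N ^ (p-1) := by ring
  rw [le_div_iff₀ hN]
  calc 2 ^ (p-1) / p ^ p * h ^ p * N = (2 ^ (p-1) / p ^ p) * (h ^ p * N) := by ring
  _ ≤ (2 ^ (p-1) / p ^ p) * (p ^ p * E / 2 ^ (p-1)) :=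
      mul_le_mul_of_nonneg_left key2 (by positivity)
  _ = E := by
      field_simp
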